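/- arXiv:2504.00291 — 2 statements merged into one kernel-verified Lean document; each statement's English description precedes it below -/
import Mathlib

section
/- If G is a connected simple graph on n vertices, then the CZ-distance cz(G) from G to the edgeless graph on the same vertex set is at least n - 1. -/
variable {V : Type*}

open Classical in
/-- Local complementation at `v`: complement the induced subgraph on `N_G(v)`. -/
noncomputable def localComp (G : SimpleGraph V) (v : V) : SimpleGraph V where
  Adj x y := x ≠ y ∧ (if G.Adj v x ∧ G.Adj v y then ¬ G.Adj x y else G.Adj x y)
  symm := by
    constructor
    intro x y ⟨hxy, h⟩
    refine ⟨hxy.symm, ?_⟩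
    by_cases hc : G.Adj v x ∧ G.Adj v y
    · rw [if_pos hc] at h
      rw [if_pos ⟨hc.2, hc.1⟩]
      exact fun h' => h h'.symm
    · rw [if_neg hc] at h
      rw [if_neg (fun h' => hc ⟨h'.2, h'.1⟩)]
      exact h.symm
  loopless := ⟨fun x hx => hx.1 rfl⟩

/-- Toggle (add or remove) the edge `uv`. -/
def toggle (G : SimpleGraph V) (u v : V) : SimpleGraph V where
  Adj x y := x ≠ y ∧ Xor' (G.Adj x y) ((x = u ∧ y = v) ∨ (x = v ∧ y = u))
  symm := by
    constructor
    intro x y ⟨hxy, h⟩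
    refine ⟨hxy.symm, ?_⟩
    rw [G.adj_comm y x]
    unfold Xor' at *
    unfold Xor at *
    tauto
  loopless := ⟨fun x hx => hx.1 rfl⟩

/-- Local equivalence: related by a sequence of local complementations. -/
def LocallyEquiv (G H : SimpleGraph V) : Prop :=
  Relation.ReflTransGen (fun A B => ∃ v, B = localComp A v) G H

/-- `CZle G H k` : there is a sequence `G = G₀, G₀', G₁, G₁', …, G_k, G_k' = H`
with each `Gᵢ'` locally equivalent to `Gᵢ` and each `Gᵢ` (i ≥ 1) obtained from
`G_{i-1}'` by adding or removing a single edge. -/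
inductive CZle : SimpleGraph V → SimpleGraph V → ℕ → Prop
  | base {G H : SimpleGraph V} : LocallyEquiv G H → CZle G H 0
  | step {G G' F H : SimpleGraph V} {k : ℕ} (u v : V) :
      LocallyEquiv G G' → u ≠ v → F = toggle G' u v → CZle F H k → CZle G H (k + 1)

/-- The CZ-distance between two graphs on the same vertex set. -/
noncomputable def czDist (G H : SimpleGraph V) : ℕ := sInf {k | CZle G H k}

/-- The CZ-distance of a graph: CZ-distance to the edgeless graph. -/
noncomputable def cz (G : SimpleGraph V) : ℕ := czDist G ⊥

open Classical in
/-- Complementing on a vertex set `X`: replace the induced subgraph on `X` by its complement. -/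
noncomputable def complOn (G : SimpleGraph V) (X : Set V) : SimpleGraph V :=
  SimpleGraph.fromRel (fun x y => if x ∈ X ∧ y ∈ X then ¬ G.Adj x y else G.Adj x y)

open Classical in
/-- The adjacency matrix over GF(2). -/
noncomputable def adjMat (G : SimpleGraph V) : Matrix V V (ZMod 2) :=
  fun x y => if G.Adj x y then 1 else 0

/-- `H` is a rank-`p` perturbation of `G`. -/
def IsRankPerturbation [Fintype V] (p : ℕ) (G H : SimpleGraph V) : Prop :=
  ∃ M : Matrix V V (ZMod 2), M.IsSymm ∧ M.rank ≤ p ∧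
    ∀ x y : V, x ≠ y → adjMat H x y = adjMat G x y + M x y

/-- `G` is a circle graph: the overlap graph of a family of closed intervals in `ℝ`
with pairwise distinct endpoints. -/
def IsCircleGraph (G : SimpleGraph V) : Prop :=
  ∃ l r : V → ℝ, (∀ v, l v < r v) ∧
    Function.Injective (fun p : V × Bool => if p.2 then r p.1 else l p.1) ∧
    ∀ x y, G.Adj x y ↔
      ((l x < l y ∧ l y < r x ∧ r x < r y) ∨ (l y < l x ∧ l x < r y ∧ r y < r x))

/-- Two vertex sets are homogeneous: complete or anticomplete to each other. -/
def Homog (G : SimpleGraph V) (X Y : Finset V) : Prop :=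
  (∀ x ∈ X, ∀ y ∈ Y, G.Adj x y) ∨ (∀ x ∈ X, ∀ y ∈ Y, ¬ G.Adj x y)

/-- Every part of the partition `P` has red degree (number of other parts it is
inhomogeneous to) at most `k`. -/
def RedDegLE [Fintype V] [DecidableEq V] (G : SimpleGraph V) (P : Finpartition (Finset.univ : Finset V))
    (k : ℕ) : Prop :=
  ∀ X ∈ P.parts, {Y : Finset V | Y ∈ P.parts ∧ Y ≠ X ∧ ¬ Homog G X Y}.ncard ≤ k

/-- One contraction: merge two parts of the partition. -/
def MergeStep [Fintype V] [DecidableEq V]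
    (P Q : Finpartition (Finset.univ : Finset V)) : Prop :=
  ∃ A B, A ∈ P.parts ∧ B ∈ P.parts ∧ A ≠ B ∧
    Q.parts = insert (A ∪ B) ((P.parts.erase A).erase B)

/-- `G` has twin-width at most `k`: there is a contraction (partition) sequence from
the discrete partition to the trivial one in which every partition has red degree at
most `k`. -/
def TwinWidthLE [Fintype V] [DecidableEq V] (G : SimpleGraph V) (k : ℕ) : Prop :=
  ∃ (m : ℕ) (seq : Fin (m + 1) → Finpartition (Finset.univ : Finset V)),
    (∀ X ∈ (seq 0).parts, X.card = 1) ∧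
    (seq (Fin.last m)).parts.card ≤ 1 ∧
    (∀ i : Fin m, MergeStep (seq i.castSucc) (seq i.succ)) ∧
    (∀ i, RedDegLE G (seq i) k)

/-- `H` is obtained from `G` (in which `u` is isolated) by adding all edges between `u`
and `N_G(v)`, possibly adding the edge `uv`, and then adding at most `k` additional
edges incident to `u`. -/
def ExtendStep (k : ℕ) (G H : SimpleGraph V) (u v : V) : Prop :=
  u ≠ v ∧ G.neighborSet u = ∅ ∧
  (∀ x y, x ≠ u → y ≠ u → (H.Adj x y ↔ G.Adj x y)) ∧
  G.neighborSet v ⊆ H.neighborSet u ∧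
  ∃ T : Finset V, T.card ≤ k ∧ H.neighborSet u ⊆ G.neighborSet v ∪ {v} ∪ ↑T

/-- Number of connected components. -/
noncomputable def Ncomp (G : SimpleGraph V) : ℕ := Nat.card G.ConnectedComponent

lemma reach_mono {A B : SimpleGraph V} (h : ∀ a b, A.Adj a b → B.Reachable a b) :
    ∀ {x y}, A.Reachable x y → B.Reachable x y := by
  intro x y hxy
  rw [SimpleGraph.reachable_iff_reflTransGen] at hxy
  induction hxy with
  | refl => exact SimpleGraph.Reachable.refl _
  | tail _ hadj ih => exact ih.trans (h _ _ hadj)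

lemma localComp_adj_to_reach (G : SimpleGraph V) (v : V) {a b : V}
    (h : (localComp G v).Adj a b) : G.Reachable a b := by
  obtain ⟨hab, h⟩ := (show _ ∧ _ from h)
  split_ifs at h with hc
  · exact (hc.1.symm.reachable).trans hc.2.reachable
  · exact h.reachable

lemma adj_to_localComp_reach (G : SimpleGraph V) (v : V) {a b : V}
    (h : G.Adj a b) : (localComp G v).Reachable a b := by
  by_cases hc : G.Adj v a ∧ G.Adj v b
  · have h1 : (localComp G v).Adj a v := by
      show _ ∧ _; exact ⟨hc.1.ne', by rw [if_neg (fun hh => G.loopless.irrefl v hh.2)]; exact hc.1.symm⟩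
    have h2 : (localComp G v).Adj v b := by
      show _ ∧ _; exact ⟨hc.2.ne, by rw [if_neg (fun hh => G.loopless.irrefl v hh.1)]; exact hc.2⟩
    exact h1.reachable.trans h2.reachable
  · exact SimpleGraph.Adj.reachable (by show _ ∧ _; exact ⟨h.ne, by rw [if_neg hc]; exact h⟩)

lemma localComp_reachable (G : SimpleGraph V) (v : V) :
    (localComp G v).Reachable = G.Reachable := by
  funext x y; apply propext
  constructor
  · exact reach_mono (fun a b h => localComp_adj_to_reach G v h)
  · exact reach_mono (fun a b h => adj_to_localComp_reach G v h)

lemma locallyEquiv_reachable {G H : SimpleGraph V} (h : LocallyEquiv G H) :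
    G.Reachable = H.Reachable := by
  induction h with
  | refl => rfl
  | tail _ hstep ih =>
    obtain ⟨v, rfl⟩ := hstep
    rw [ih, ← localComp_reachable]

lemma Ncomp_eq_of_reachable {G H : SimpleGraph V} (h : G.Reachable = H.Reachable) :
    Ncomp G = Ncomp H := by
  unfold Ncomp
  show Nat.card (Quot G.Reachable) = Nat.card (Quot H.Reachable)
  rw [h]

lemma Ncomp_le_of_le [Fintype V] {G H : SimpleGraph V} (h : G ≤ H) :
    Ncomp H ≤ Ncomp G := by
  have hsurj : Function.Surjective
      (SimpleGraph.ConnectedComponent.map (SimpleGraph.Hom.ofLE h)) := by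
    intro c
    induction c using SimpleGraph.ConnectedComponent.ind with
    | _ w => exact ⟨G.connectedComponentMk w, rfl⟩
  exact Nat.card_le_card_of_surjective _ hsurj

lemma reach_of_add_edge {G H : SimpleGraph V} {u v : V}
    (hadj : ∀ a b, H.Adj a b → G.Adj a b ∨ (a = u ∧ b = v) ∨ (a = v ∧ b = u)) :
    ∀ {x y}, H.Reachable x y → G.Reachable x y ∨
      (G.Reachable x u ∧ G.Reachable v y) ∨ (G.Reachable x v ∧ G.Reachable u y) := by
  intro x y hxy
  rw [SimpleGraph.reachable_iff_reflTransGen] at hxy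
  induction hxy with
  | refl => exact Or.inl (SimpleGraph.Reachable.refl _)
  | @tail b c _ hbc ih =>
    rcases hadj _ _ hbc with h | ⟨rfl, rfl⟩ | ⟨rfl, rfl⟩
    · rcases ih with h1 | ⟨h1, h2⟩ | ⟨h1, h2⟩
      · exact Or.inl (h1.trans h.reachable)
      · exact Or.inr (Or.inl ⟨h1, h2.trans h.reachable⟩)
      · exact Or.inr (Or.inr ⟨h1, h2.trans h.reachable⟩)
    · rcases ih with h1 | ⟨h1, h2⟩ | ⟨h1, h2⟩
      · exact Or.inr (Or.inl ⟨h1, SimpleGraph.Reachable.refl _⟩)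
      · exact Or.inl (h1.trans h2.symm)
      · exact Or.inl h1
    · rcases ih with h1 | ⟨h1, h2⟩ | ⟨h1, h2⟩
      · exact Or.inr (Or.inr ⟨h1, SimpleGraph.Reachable.refl _⟩)
      · exact Or.inl h1
      · exact Or.inl (h1.trans h2.symm)

lemma Ncomp_le_add_one [Fintype V] {G H : SimpleGraph V} {u v : V} (hle : G ≤ H)
    (hadj : ∀ a b, H.Adj a b → G.Adj a b ∨ (a = u ∧ b = v) ∨ (a = v ∧ b = u)) :
    Ncomp G ≤ Ncomp H + 1 := by
  classical
  set f : G.ConnectedComponent → Option H.ConnectedComponent := fun C =>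
    if C = G.connectedComponentMk v then none
    else some (C.map (SimpleGraph.Hom.ofLE hle)) with hf
  have hinj : Function.Injective f := by
    intro C D hCD
    by_cases hC : C = G.connectedComponentMk v <;> by_cases hD : D = G.connectedComponentMk v
    · exact hC.trans hD.symm
    · simp only [hf, if_pos hC, if_neg hD] at hCD; exact absurd hCD (by simp)
    · simp only [hf, if_neg hC, if_pos hD] at hCD; exact absurd hCD (by simp)
    · simp only [hf, if_neg hC, if_neg hD, Option.some.injEq] at hCD
      obtain ⟨x, rfl⟩ := C.exists_rep
      obtain ⟨y, rfl⟩ := D.exists_rep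
      have hreach : H.Reachable x y := SimpleGraph.ConnectedComponent.eq.mp hCD
      rcases reach_of_add_edge hadj hreach with h1 | ⟨h1, h2⟩ | ⟨h1, h2⟩
      · exact SimpleGraph.ConnectedComponent.eq.mpr h1
      · exact absurd (SimpleGraph.ConnectedComponent.eq.mpr h2.symm) hD
      · exact absurd (SimpleGraph.ConnectedComponent.eq.mpr h1) hC
  calc Ncomp G ≤ Nat.card (Option H.ConnectedComponent) :=
        Nat.card_le_card_of_injective f hinj
    _ = Ncomp H + 1 := by rw [Finite.card_option]; rfl

lemma toggle_le {G : SimpleGraph V} {u v : V} (h : G.Adj u v) : toggle G u v ≤ G := by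
  intro a b hab'
  obtain ⟨hab, hx⟩ := (show _ ∧ _ from hab')
  rcases hx with ⟨hG, _⟩ | ⟨hp, hn⟩
  · exact hG
  · exfalso
    rcases hp with ⟨rfl, rfl⟩ | ⟨rfl, rfl⟩
    · exact hn h
    · exact hn h.symm

lemma le_toggle {G : SimpleGraph V} {u v : V} (h : ¬ G.Adj u v) : G ≤ toggle G u v := by
  intro a b hab
  show _ ∧ _
  refine ⟨hab.ne, Or.inl ⟨hab, ?_⟩⟩
  rintro (⟨rfl, rfl⟩ | ⟨rfl, rfl⟩)
  · exact h hab
  · exact h hab.symm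

lemma Ncomp_toggle [Fintype V] {G : SimpleGraph V} {u v : V} :
    Ncomp (toggle G u v) ≤ Ncomp G + 1 := by
  by_cases h : G.Adj u v
  · refine Ncomp_le_add_one (u := u) (v := v) (toggle_le h) ?_
    intro a b hab
    by_cases hp : (a = u ∧ b = v) ∨ (a = v ∧ b = u)
    · exact Or.inr hp
    · exact Or.inl (by show _ ∧ _; exact ⟨hab.ne, Or.inl ⟨hab, hp⟩⟩)
  · exact le_trans (Ncomp_le_of_le (le_toggle h)) (Nat.le_succ _)

lemma czle_bound [Fintype V] {G H : SimpleGraph V} {k : ℕ} (h : CZle G H k) :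
    Ncomp H ≤ Ncomp G + k := by
  induction h with
  | base hGH =>
    rw [Ncomp_eq_of_reachable (locallyEquiv_reachable hGH)]
    simp
  | @step G₀ G' F H₀ k u v hGG' huv hF hFH ih =>
    have h1 : Ncomp F ≤ Ncomp G' + 1 := by rw [hF]; exact Ncomp_toggle
    have h2 : Ncomp G₀ = Ncomp G' := Ncomp_eq_of_reachable (locallyEquiv_reachable hGG')
    omega

lemma czle_exists [Fintype V] :
    ∀ (m : ℕ) (G : SimpleGraph V), G.edgeSet.ncard = m → ∃ k, CZle G (⊥ : SimpleGraph V) k := by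
  intro m
  induction m using Nat.strong_induction_on with
  | _ m ih =>
    intro G hm
    by_cases hbot : G = ⊥
    · subst hbot
      exact ⟨0, CZle.base Relation.ReflTransGen.refl⟩
    · have hedge : ∃ a b, G.Adj a b := by
        by_contra hcon
        push_neg at hcon
        exact hbot (by ext a b; simp [hcon a b])
      obtain ⟨a, b, hab⟩ := hedge
      have hlt : toggle G a b < G := by
        refine lt_of_le_of_ne (toggle_le hab) ?_
        intro heq
        have : (toggle G a b).Adj a b := by rw [heq]; exact hab
        rcases (show _ ∧ _ from this).2 with ⟨_, hn⟩ | ⟨_, hn⟩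
        · exact hn (Or.inl ⟨rfl, rfl⟩)
        · exact hn hab
      have hcard : (toggle G a b).edgeSet.ncard < m := by
        rw [← hm]
        exact Set.ncard_lt_ncard (SimpleGraph.edgeSet_ssubset_edgeSet.mpr hlt)
          (Set.toFinite _)
      obtain ⟨k, hk⟩ := ih _ hcard (toggle G a b) rfl
      exact ⟨k + 1, CZle.step a b Relation.ReflTransGen.refl hab.ne rfl hk⟩

theorem stmt4 [Fintype V] (G : SimpleGraph V) (n : ℕ) (hn : Fintype.card V = n)
    (hG : G.Connected) : n - 1 ≤ cz G := by
  classical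
  subst hn
  obtain ⟨k, hk⟩ := czle_exists _ G rfl
  have hne : {k | CZle G (⊥ : SimpleGraph V) k}.Nonempty := ⟨k, hk⟩
  have hmem : CZle G (⊥ : SimpleGraph V) (sInf {k | CZle G (⊥ : SimpleGraph V) k}) :=
    Nat.sInf_mem hne
  have hbound := czle_bound hmem
  have h1 : Ncomp G = 1 := by
    rw [Ncomp, Nat.card_eq_one_iff_unique]
    constructor
    · constructor
      intro C D
      obtain ⟨x, rfl⟩ := C.exists_rep
      obtain ⟨y, rfl⟩ := D.exists_rep
      exact SimpleGraph.ConnectedComponent.eq.mpr (hG.preconnected x y)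
    · obtain ⟨x⟩ := hG.nonempty
      exact ⟨G.connectedComponentMk x⟩
  have h2 : Ncomp (⊥ : SimpleGraph V) = Fintype.card V := by
    have hbij : Function.Bijective (⊥ : SimpleGraph V).connectedComponentMk := by
      constructor
      · intro x y hxy
        exact SimpleGraph.reachable_bot.mp (SimpleGraph.ConnectedComponent.eq.mp hxy)
      · intro C
        obtain ⟨x, rfl⟩ := C.exists_rep
        exact ⟨x, rfl⟩
    rw [Ncomp, ← Nat.card_eq_of_bijective _ hbij, Nat.card_eq_fintype_card]
  rw [cz, czDist]
  omega
end

section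
/- Let G be an n-vertex simple graph and let H be obtained from G by complementing on a set X ⊆ V(G) (replacing the induced subgraph on X by its complement). Then cz(G,H) ≤ 2n - 2. -/
variable {V : Type*}

section Aux

open Classical

/-- prepend a local equivalence to a CZ sequence -/
lemma czle_pre {A B H : SimpleGraph V} {k : ℕ} (h : LocallyEquiv A B) (hc : CZle B H k) :
    CZle A H k := by
  cases hc with
  | base hBH => exact .base (h.trans hBH)
  | step u v h1 huv hF hk => exact .step u v (h.trans h1) huv hF hk

lemma czle_trans {G A H : SimpleGraph V} {j k : ℕ} (h1 : CZle G A j) (h2 : CZle A H k) :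
    CZle G H (j + k) := by
  induction h1 generalizing H k with
  | base h => simpa using czle_pre h h2
  | step u v hle huv hF _ ih =>
    have := CZle.step u v hle huv hF (ih h2)
    simpa [Nat.add_right_comm] using this

/-- the set of vertices where the neighbourhoods of `v` in `G` and `H` differ -/
noncomputable def diffAt [Fintype V] (v : V) (G H : SimpleGraph V) : Finset V :=
  Finset.univ.filter fun x => ¬ (H.Adj v x ↔ G.Adj v x)

lemma mem_diffAt [Fintype V] {v x : V} {G H : SimpleGraph V} :
    x ∈ diffAt v G H ↔ ¬ (H.Adj v x ↔ G.Adj v x) := by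
  simp [diffAt]

lemma not_mem_diffAt_self [Fintype V] (v : V) (G H : SimpleGraph V) :
    v ∉ diffAt v G H := by
  simp [mem_diffAt, G.loopless.irrefl v, H.loopless.irrefl v]

lemma diffAt_card_le [Fintype V] (v : V) (G H : SimpleGraph V) :
    (diffAt v G H).card ≤ Fintype.card V - 1 := by
  have hsub : diffAt v G H ⊆ Finset.univ.erase v := by
    intro x hx
    refine Finset.mem_erase.2 ⟨?_, Finset.mem_univ x⟩
    rintro rfl
    exact not_mem_diffAt_self _ G H hx
  calc (diffAt v G H).card ≤ (Finset.univ.erase v).card := Finset.card_le_card hsub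
    _ = Fintype.card V - 1 := by
        rw [Finset.card_erase_of_mem (Finset.mem_univ v), Finset.card_univ]

lemma toggle_adj {G : SimpleGraph V} {u v x y : V} :
    (toggle G u v).Adj x y ↔
      x ≠ y ∧ Xor' (G.Adj x y) ((x = u ∧ y = v) ∨ (x = v ∧ y = u)) := Iff.rfl

/-- If `G` and `H` agree on all edges not incident to `v`, then `H` is reachable
from `G` by toggling the edges at `v` where they differ. -/
lemma czle_of_diff [Fintype V] (v : V) :
    ∀ (k : ℕ) (G H : SimpleGraph V),
      (∀ x y, x ≠ v → y ≠ v → (H.Adj x y ↔ G.Adj x y)) →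
      (diffAt v G H).card = k → CZle G H k := by
  intro k
  induction k with
  | zero =>
    intro G H hoff hcard
    have hemp : diffAt v G H = ∅ := Finset.card_eq_zero.1 hcard
    have hv : ∀ x, H.Adj v x ↔ G.Adj v x := by
      intro x
      by_contra hx
      have : x ∈ diffAt v G H := mem_diffAt.2 hx
      simp [hemp] at this
    have : G = H := by
      ext a b
      by_cases ha : a = v
      · subst ha; exact (hv b).symm
      · by_cases hb : b = v
        · subst hb
          rw [G.adj_comm, H.adj_comm]
          exact (hv a).symm
        · exact (hoff a b ha hb).symm
    subst this
    exact .base Relation.ReflTransGen.refl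
  | succ k ih =>
    intro G H hoff hcard
    have hne : (diffAt v G H).Nonempty := by
      rw [← Finset.card_pos, hcard]; omega
    obtain ⟨x, hx⟩ := hne
    have hxd := mem_diffAt.1 hx
    have hxv : x ≠ v := by
      rintro rfl
      exact not_mem_diffAt_self _ G H hx
    set F := toggle G v x with hF
    have hFoff : ∀ a b, a ≠ v → b ≠ v → (F.Adj a b ↔ G.Adj a b) := by
      intro a b ha hb
      rw [hF, toggle_adj]
      constructor
      · rintro ⟨hab, h⟩
        rcases h with ⟨hg, -⟩ | ⟨h, -⟩
        · exact hg
        · rcases h with ⟨h1, -⟩ | ⟨-, h2⟩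
          · exact absurd h1 ha
          · exact absurd h2 hb
      · intro hg
        exact ⟨G.ne_of_adj hg, Or.inl ⟨hg, by rintro (⟨h1, -⟩ | ⟨-, h2⟩); exacts [ha h1, hb h2]⟩⟩
    have hFv : ∀ y, y ≠ x → (F.Adj v y ↔ G.Adj v y) := by
      intro y hy
      rw [hF, toggle_adj]
      constructor
      · rintro ⟨hvy, h⟩
        rcases h with ⟨hg, -⟩ | ⟨h, -⟩
        · exact hg
        · rcases h with ⟨-, h2⟩ | ⟨h1, -⟩
          · exact absurd h2 hy
          · exact absurd h1.symm hxv
      · intro hg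
        exact ⟨G.ne_of_adj hg, Or.inl ⟨hg, by rintro (⟨-, h2⟩ | ⟨h1, -⟩); exacts [hy h2, hxv h1.symm]⟩⟩
    have hFx : F.Adj v x ↔ ¬ G.Adj v x := by
      rw [hF, toggle_adj]
      constructor
      · rintro ⟨-, h⟩
        rcases h with ⟨-, hng⟩ | ⟨-, hng⟩
        · exact absurd (Or.inl ⟨rfl, rfl⟩) hng
        · exact hng
      · intro hng
        exact ⟨fun h => hxv h.symm, Or.inr ⟨Or.inl ⟨rfl, rfl⟩, hng⟩⟩
    have hHFoff : ∀ a b, a ≠ v → b ≠ v → (H.Adj a b ↔ F.Adj a b) := by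
      intro a b ha hb
      rw [hFoff a b ha hb]
      exact hoff a b ha hb
    have hdiff : diffAt v F H = (diffAt v G H).erase x := by
      ext y
      rw [Finset.mem_erase, mem_diffAt, mem_diffAt]
      by_cases hy : y = x
      · subst hy
        simp only [ne_eq, not_true_eq_false, false_and, iff_false, not_not]
        rw [hFx]
        tauto
      · rw [hFv y hy]
        tauto
    have hcard' : (diffAt v F H).card = k := by
      rw [hdiff, Finset.card_erase_of_mem hx, hcard]; omega
    exact CZle.step v x Relation.ReflTransGen.refl (fun h => hxv h.symm) hF
      (ih F H hHFoff hcard')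

/-- auxiliary graph: replace the neighbourhood of `v` by `X \ {v}` -/
def auxG (G : SimpleGraph V) (X : Set V) (v : V) : SimpleGraph V where
  Adj a b := (a = v ∧ b ∈ X ∧ b ≠ v) ∨ (b = v ∧ a ∈ X ∧ a ≠ v) ∨ (a ≠ v ∧ b ≠ v ∧ G.Adj a b)
  symm := by
    constructor
    intro a b h
    rcases h with h | h | ⟨h1, h2, h3⟩
    · exact Or.inr (Or.inl h)
    · exact Or.inl h
    · exact Or.inr (Or.inr ⟨h2, h1, h3.symm⟩)
  loopless := by
    constructor
    intro a h
    rcases h with ⟨h1, -, h3⟩ | ⟨h1, -, h3⟩ | ⟨-, -, h⟩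
    · exact h3 h1
    · exact h3 h1
    · exact G.loopless.irrefl a h

lemma auxG_adj {G : SimpleGraph V} {X : Set V} {v a b : V} :
    (auxG G X v).Adj a b ↔
      ((a = v ∧ b ∈ X ∧ b ≠ v) ∨ (b = v ∧ a ∈ X ∧ a ≠ v) ∨ (a ≠ v ∧ b ≠ v ∧ G.Adj a b)) :=
  Iff.rfl

open Classical in
lemma localComp_adj {G : SimpleGraph V} {v x y : V} :
    (localComp G v).Adj x y ↔
      x ≠ y ∧ (if G.Adj v x ∧ G.Adj v y then ¬ G.Adj x y else G.Adj x y) := Iff.rfl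

open Classical in
lemma complOn_adj {G : SimpleGraph V} {X : Set V} {a b : V} :
    (complOn G X).Adj a b ↔
      a ≠ b ∧ (if a ∈ X ∧ b ∈ X then ¬ G.Adj a b else G.Adj a b) := by
  rw [complOn, SimpleGraph.fromRel_adj]
  have hsymm : G.Adj b a ↔ G.Adj a b := G.adj_comm b a
  constructor
  · rintro ⟨hab, h | h⟩
    · exact ⟨hab, h⟩
    · refine ⟨hab, ?_⟩
      by_cases hc : a ∈ X ∧ b ∈ X
      · rw [if_pos ⟨hc.2, hc.1⟩] at h
        rw [if_pos hc]
        exact fun hg => h hg.symm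
      · rw [if_neg (fun h' => hc ⟨h'.2, h'.1⟩)] at h
        rw [if_neg hc]
        exact h.symm
  · rintro ⟨hab, h⟩
    exact ⟨hab, Or.inl h⟩

end Aux

theorem stmt7 [Fintype V] (G : SimpleGraph V) (n : ℕ) (hn : Fintype.card V = n)
    (X : Set V) : czDist G (complOn G X) ≤ 2 * n - 2 := by
  classical
  set H := complOn G X with hH
  by_cases hX : ∃ v, v ∈ X
  · obtain ⟨v, hv⟩ := hX
    have hn1 : 1 ≤ n := by
      rw [← hn]
      exact Fintype.card_pos_iff.2 ⟨v⟩
    set G1 := auxG G X v with hG1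
    set G2 := localComp G1 v with hG2
    -- G1 agrees with G off v
    have hG1off : ∀ a b, a ≠ v → b ≠ v → (G1.Adj a b ↔ G.Adj a b) := by
      intro a b ha hb
      rw [hG1, auxG_adj]
      tauto
    have h1 : CZle G G1 ((diffAt v G G1).card) :=
      czle_of_diff v _ G G1 hG1off rfl
    have hle : LocallyEquiv G1 G2 :=
      Relation.ReflTransGen.single ⟨v, rfl⟩
    -- G2 agrees with H off v
    have hG1v : ∀ a, a ≠ v → (G1.Adj v a ↔ a ∈ X) := by
      intro a ha
      rw [hG1, auxG_adj]
      tauto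
    have hG2off : ∀ a b, a ≠ v → b ≠ v → (H.Adj a b ↔ G2.Adj a b) := by
      intro a b ha hb
      rw [hH, complOn_adj, hG2, localComp_adj]
      have e1 : G1.Adj v a ↔ a ∈ X := hG1v a ha
      have e2 : G1.Adj v b ↔ b ∈ X := hG1v b hb
      have e3 : G1.Adj a b ↔ G.Adj a b := hG1off a b ha hb
      by_cases hc : a ∈ X ∧ b ∈ X
      · rw [if_pos hc, if_pos (by rw [e1, e2]; exact hc)]
        rw [e3]
      · rw [if_neg hc, if_neg (by rw [e1, e2]; exact hc)]
        rw [e3]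
    have h2 : CZle G2 H ((diffAt v G2 H).card) :=
      czle_of_diff v _ G2 H hG2off rfl
    have h : CZle G H ((diffAt v G G1).card + (diffAt v G2 H).card) :=
      czle_trans h1 (czle_pre hle h2)
    have hb1 : (diffAt v G G1).card ≤ n - 1 := hn ▸ diffAt_card_le v G G1
    have hb2 : (diffAt v G2 H).card ≤ n - 1 := hn ▸ diffAt_card_le v G2 H
    calc czDist G H ≤ (diffAt v G G1).card + (diffAt v G2 H).card := Nat.sInf_le h
      _ ≤ 2 * n - 2 := by omega
  · have hHG : H = G := by
      rw [hH]
      ext a b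
      rw [complOn_adj]
      have haX : a ∉ X := fun h => hX ⟨a, h⟩
      rw [if_neg (fun h => haX h.1)]
      exact ⟨fun h => h.2, fun h => ⟨G.ne_of_adj h, h⟩⟩
    have h0 : CZle G H 0 := hHG ▸ CZle.base Relation.ReflTransGen.refl
    exact le_trans (Nat.sInf_le h0) (Nat.zero_le _)
end
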